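/- arXiv:1904.02829 — 4 statements merged into one kernel-verified Lean document; each statement's English description precedes it below -/
import Mathlib

section
/- For every permutation σ of [n], zeil(σ) = min(rmax(σ), tls(σ)), where zeil(σ) is the largest m ≥ 1 such that the entries n, n−1, ..., n−m+1 appear in decreasing order of position in σ, rmax(σ) is the number of right-to-left maxima of σ, and tls(σ) is the tail length of s(σ). -/
/-- West's stack-sorting map, implemented with fuel (fuel = length suffices). -/
def ssAux : ℕ → List ℕ → List ℕ
  | 0, _ => []
  | _ + 1, [] => []
  | fuel + 1, l =>
    let m := l.foldr max 0
    let i := l.idxOf m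
    ssAux fuel (l.take i) ++ ssAux fuel (l.drop (i + 1)) ++ [m]

/-- West's stack-sorting map `s`. -/
def stackSort (l : List ℕ) : List ℕ := ssAux l.length l

/-- `σ` contains the classical pattern `τ`. -/
def Contains (τ σ : List ℕ) : Prop :=
  ∃ f : Fin τ.length → Fin σ.length, StrictMono f ∧
    ∀ i j : Fin τ.length, τ.get i < τ.get j ↔ σ.get (f i) < σ.get (f j)

/-- `σ` avoids the classical pattern `τ`. -/
def Avoids (σ τ : List ℕ) : Prop := ¬ Contains τ σ

/-- The tail length of a permutation `π` of `[n]` (as a list, 1-indexed entries): the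
smallest `ℓ ≥ 0` such that `π_{n-ℓ} ≠ n-ℓ`, with the tail length of the identity equal
to `n`. -/
noncomputable def tailLen (n : ℕ) (π : List ℕ) : ℕ :=
  sInf {ℓ : ℕ | ℓ = n ∨ π.getD (n - ℓ - 1) 0 ≠ n - ℓ}

/-- The number of right-to-left maxima of `σ`. -/
def rmaxCount (σ : List ℕ) : ℕ :=
  (Finset.univ.filter (fun i : Fin σ.length =>
    ∀ j : Fin σ.length, i < j → σ.get j < σ.get i)).card

lemma foldr_max_mem : ∀ (l : List ℕ), l ≠ [] → l.foldr max 0 ∈ l := by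
  intro l
  induction l with
  | nil => simp
  | cons a t ih =>
    intro _
    rcases t with _ | ⟨b, t'⟩
    · simp
    · rcases max_cases a ((b::t').foldr max 0) with ⟨h1, _⟩ | ⟨h1, _⟩ <;>
        simp only [List.foldr_cons] at * <;> rw [h1]
      · exact List.mem_cons_self
      · exact List.mem_cons_of_mem _ (ih (by simp))

lemma le_foldr_max : ∀ (l : List ℕ) (a : ℕ), a ∈ l → a ≤ l.foldr max 0 := by
  intro l
  induction l with
  | nil => simp
  | cons b t ih =>
    intro a ha
    rcases List.mem_cons.1 ha with rfl | h
    · exact le_max_left _ _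
    · exact le_trans (ih a h) (le_max_right _ _)

lemma split_at_indexOf {l : List ℕ} {m : ℕ} (hm : m ∈ l) :
    l = l.take (l.idxOf m) ++ m :: l.drop (l.idxOf m + 1) := by
  have hi : l.idxOf m < l.length := List.idxOf_lt_length_iff.2 hm
  conv_lhs => rw [← List.take_append_drop (l.idxOf m) l]
  rw [List.drop_eq_getElem_cons hi, List.getElem_idxOf hi]

lemma ssAux_perm : ∀ (fuel : ℕ) (l : List ℕ), l.length ≤ fuel → (ssAux fuel l).Perm l := by
  intro fuel
  induction fuel with
  | zero => intro l hl; rw [List.length_eq_zero_iff.1 (Nat.le_zero.1 hl)]; exact List.Perm.refl _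
  | succ fuel ih =>
    intro l hl
    rcases l with _ | ⟨a, t⟩
    · exact List.Perm.refl _
    set l := a :: t with hldef
    set m := l.foldr max 0 with hmdef
    set i := l.idxOf m with hidef
    have hm : m ∈ l := foldr_max_mem l (by simp [hldef])
    have hi : i < l.length := List.idxOf_lt_length_iff.2 hm
    have hsplit := split_at_indexOf hm
    have h1 : (l.take i).length ≤ fuel := by
      rw [List.length_take]; omega
    have h2 : (l.drop (i+1)).length ≤ fuel := by
      rw [List.length_drop]; omega
    have : ssAux (fuel+1) l = ssAux fuel (l.take i) ++ ssAux fuel (l.drop (i+1)) ++ [m] := rfl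
    rw [this]
    have p1 : (ssAux fuel (l.take i) ++ ssAux fuel (l.drop (i+1)) ++ [m]).Perm
        (l.take i ++ l.drop (i+1) ++ [m]) :=
      ((ih _ h1).append (ih _ h2)).append (List.Perm.refl _)
    refine p1.trans ?_
    have p2 : (l.take i ++ l.drop (i+1) ++ [m]).Perm (l.take i ++ m :: l.drop (i+1)) := by
      rw [List.append_assoc]
      refine (List.Perm.refl _).append ?_
      exact List.perm_append_comm
    refine p2.trans ?_
    rw [← hsplit]

open List in
lemma ssAux_suffix_filter : ∀ (fuel : ℕ) (l : List ℕ) (t : ℕ), l.length ≤ fuel →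
    (l.filter (fun v => t ≤ v)).Pairwise (· > ·) →
    (l.filter (fun v => t ≤ v)).reverse <:+ ssAux fuel l := by
  intro fuel
  induction fuel with
  | zero =>
    intro l t hl _
    rw [List.length_eq_zero_iff.1 (Nat.le_zero.1 hl)]
    simp
  | succ fuel ih =>
    intro l t hl hsort
    rcases l with _ | ⟨a, tl⟩
    · simp
    set l := a :: tl with hldef
    set m := l.foldr max 0 with hmdef
    set i := l.idxOf m with hidef
    have hm : m ∈ l := foldr_max_mem l (by simp [hldef])
    have hi : i < l.length := List.idxOf_lt_length_iff.2 hm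
    have hsplit := split_at_indexOf hm
    have hss : ssAux (fuel+1) l = ssAux fuel (l.take i) ++ ssAux fuel (l.drop (i+1)) ++ [m] := rfl
    by_cases htm : t ≤ m
    · -- filter of take is empty
      have hLnil : (l.take i).filter (fun v => t ≤ v) = [] := by
        rw [List.filter_eq_nil_iff]
        intro u hu
        simp only [decide_eq_true_eq]
        intro htu
        have hum : u ≤ m := le_foldr_max l u (List.take_subset _ _ hu)
        have humem : u ∈ (l.take i).filter (fun v => t ≤ v) := by
          rw [List.mem_filter]; exact ⟨hu, by simpa⟩
        have hsort' : (((l.take i).filter (fun v => t ≤ v)) ++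
            (m :: (l.drop (i+1))).filter (fun v => t ≤ v)).Pairwise (· > ·) := by
          rw [← List.filter_append, ← hsplit]; exact hsort
        have hmmem : m ∈ (m :: (l.drop (i+1))).filter (fun v => t ≤ v) := by
          rw [List.mem_filter]; exact ⟨List.mem_cons_self, by simpa⟩
        have := (List.pairwise_append.1 hsort').2.2 u humem m hmmem
        omega
      have hfl : l.filter (fun v => t ≤ v) = m :: (l.drop (i+1)).filter (fun v => t ≤ v) := by
        conv_lhs => rw [hsplit]
        rw [List.filter_append, hLnil, List.nil_append, List.filter_cons, if_pos (by simpa)]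
      rw [hfl] at hsort ⊢
      have hsortR : ((l.drop (i+1)).filter (fun v => t ≤ v)).Pairwise (· > ·) :=
        (List.pairwise_cons.1 hsort).2
      have h2 : (l.drop (i+1)).length ≤ fuel := by rw [List.length_drop]; omega
      obtain ⟨w, hw⟩ := ih (l.drop (i+1)) t h2 hsortR
      refine ⟨ssAux fuel (l.take i) ++ w, ?_⟩
      rw [hss, List.reverse_cons, ← hw]
      simp [List.append_assoc]
    · have : l.filter (fun v => t ≤ v) = [] := by
        rw [List.filter_eq_nil_iff]
        intro u hu
        simp only [decide_eq_true_eq]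
        have := le_foldr_max l u hu
        omega
      rw [this]
      simp
open List

lemma cons_sublist_right_of_not_mem : ∀ (A : List ℕ) {x : ℕ} {tl B : List ℕ},
    (x :: tl) <+ A ++ B → x ∉ A → (x :: tl) <+ B := by
  intro A
  induction A with
  | nil => intro x tl B h _; simpa using h
  | cons c A' ih =>
    intro x tl B h hx
    rcases List.sublist_cons_iff.1 h with h' | ⟨r, hr, _⟩
    · exact ih h' (fun hc => hx (List.mem_cons_of_mem _ hc))
    · exact absurd (by rw [List.cons.injEq] at hr; exact hr.1 ▸ List.mem_cons_self) hx

lemma pair_sublist_of_indexOf_lt {l : List ℕ} {u v : ℕ} (hu : u ∈ l) (hv : v ∈ l)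
    (h : l.idxOf u < l.idxOf v) : [u, v] <+ l := by
  have hsplit := split_at_indexOf hv
  have hiu : l.idxOf u < l.length := List.idxOf_lt_length_iff.2 hu
  have hut : u ∈ l.take (l.idxOf v) := by
    have : (l.take (l.idxOf v))[l.idxOf u]'(by simp; constructor <;> omega) = l[l.idxOf u] := by
      simp
    rw [List.getElem_idxOf hiu] at this
    exact this ▸ List.getElem_mem _
  have : [u] ++ [v] <+ l.take (l.idxOf v) ++ (v :: l.drop (l.idxOf v + 1)) :=
    List.Sublist.append (List.singleton_sublist.2 hut)
      (List.cons_sublist_cons.2 (List.nil_sublist _))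
  rw [← hsplit] at this
  exact this

lemma pair_sublist_indices {l : List ℕ} {x a : ℕ} (h : [x, a] <+ l) :
    ∃ p q : ℕ, p < q ∧ ∃ (hq : q < l.length), ∃ (hp : p < l.length), l[p] = x ∧ l[q] = a := by
  induction l with
  | nil => simp at h
  | cons c tl ih =>
    rcases List.sublist_cons_iff.1 h with h' | ⟨r, hr, hrt⟩
    · obtain ⟨p, q, hpq, hq, hp, h1, h2⟩ := ih h'
      exact ⟨p+1, q+1, by omega, by simp; omega, by simp; omega, by simpa, by simpa⟩
    · rw [List.cons.injEq] at hr
      obtain ⟨rfl, rfl⟩ := hr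
      have ha : a ∈ tl := by
        have : a ∈ [a] := List.mem_singleton_self a
        exact hrt.mem this
      obtain ⟨q, hq, hqa⟩ := List.mem_iff_getElem.1 ha
      exact ⟨0, q+1, by omega, by simp; omega, by simp, by simp, by simpa⟩

open List in
lemma ssAux_rlmax_after : ∀ (fuel : ℕ) (l : List ℕ) (x y a : ℕ), l.length ≤ fuel →
    x < y → a < x → [x, y] <+ l →
    (∃ l₁ l₂, l = l₁ ++ a :: l₂ ∧ ∀ b ∈ l₂, b < a) →
    [x, a] <+ ssAux fuel l := by
  intro fuel
  induction fuel with
  | zero =>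
    intro l x y a hl _ _ hxy _
    rw [List.length_eq_zero_iff.1 (Nat.le_zero.1 hl)] at hxy
    simp at hxy
  | succ fuel ih =>
    intro l x y a hl hxylt haxlt hxy hrl
    rcases l with _ | ⟨c, tl⟩
    · simp at hxy
    set l := c :: tl with hldef
    set m := l.foldr max 0 with hmdef
    set i := l.idxOf m with hidef
    have hm : m ∈ l := foldr_max_mem l (by simp [hldef])
    have hi : i < l.length := List.idxOf_lt_length_iff.2 hm
    have hss : ssAux (fuel+1) l = ssAux fuel (l.take i) ++ ssAux fuel (l.drop (i+1)) ++ [m] := rfl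
    obtain ⟨l₁, l₂, hsplit2, hl₂⟩ := hrl
    have hymem : y ∈ l := hxy.mem (by simp)
    have hym : y ≤ m := le_foldr_max l y hymem
    have hxm : x < m := lt_of_lt_of_le hxylt hym
    have ham : a < m := lt_trans haxlt hxm
    have hml₁ : m ∈ l₁ := by
      have := hm
      rw [hsplit2] at this
      rcases List.mem_append.1 this with h' | h'
      · exact h'
      · rcases List.mem_cons.1 h' with rfl | h''
        · omega
        · exact absurd (hl₂ m h'') (by omega)
    have hil₁ : i < l₁.length := by
      have : i = l₁.idxOf m := by
        rw [hidef, hsplit2, List.idxOf_append_of_mem hml₁]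
      rw [this]
      exact List.idxOf_lt_length_iff.2 hml₁
    have hRsplit : l.drop (i+1) = l₁.drop (i+1) ++ a :: l₂ := by
      conv_lhs => rw [hsplit2]
      exact List.drop_append_of_le_length (by omega)
    have haR : a ∈ l.drop (i+1) := by
      rw [hRsplit]; exact List.mem_append.2 (Or.inr (List.mem_cons_self))
    have hLlen : (l.take i).length ≤ fuel := by rw [List.length_take]; omega
    have hRlen : (l.drop (i+1)).length ≤ fuel := by rw [List.length_drop]; omega
    rw [hss]
    by_cases hxL : x ∈ l.take i
    · have hxs : x ∈ ssAux fuel (l.take i) := ((ssAux_perm fuel _ hLlen).mem_iff).2 hxL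
      have has : a ∈ ssAux fuel (l.drop (i+1)) := ((ssAux_perm fuel _ hRlen).mem_iff).2 haR
      have : [x] ++ [a] <+ ssAux fuel (l.take i) ++ ssAux fuel (l.drop (i+1)) :=
        List.Sublist.append (List.singleton_sublist.2 hxs) (List.singleton_sublist.2 has)
      exact this.trans (List.sublist_append_left _ _)
    · have hxy' : [x, y] <+ l.take i ++ (m :: l.drop (i+1)) := by
        rw [← split_at_indexOf hm]; exact hxy
      have hxy'' : [x, y] <+ m :: l.drop (i+1) :=
        cons_sublist_right_of_not_mem _ hxy' hxL
      have hxyR : [x, y] <+ l.drop (i+1) := by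
        rcases List.sublist_cons_iff.1 hxy'' with h' | ⟨r, hr, _⟩
        · exact h'
        · rw [List.cons.injEq] at hr; omega
      have := ih (l.drop (i+1)) x y a hRlen hxylt haxlt hxyR
        ⟨l₁.drop (i+1), l₂, hRsplit, hl₂⟩
      exact this.trans ((List.sublist_append_right _ _).trans (List.sublist_append_left _ _))


lemma chain_mono (n : ℕ) (σ : List ℕ) {m : ℕ}
    (hchain : ∀ k, k + 2 ≤ m → σ.idxOf (n - k) < σ.idxOf (n - k - 1)) :
    ∀ k k', k' < k → k + 1 ≤ m → σ.idxOf (n - k') < σ.idxOf (n - k) := by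
  intro k
  induction k with
  | zero => intro k' h _; omega
  | succ k ih =>
    intro k' h1 h2
    have hlast : σ.idxOf (n - k) < σ.idxOf (n - (k+1)) := by
      have h3 := hchain k (by omega)
      have h4 : n - k - 1 = n - (k+1) := by omega
      rwa [h4] at h3
    rcases (by omega : k' = k ∨ k' < k) with rfl | h
    · exact hlast
    · exact lt_trans (ih k' h (by omega)) hlast

lemma rlmax_at_chain (n : ℕ) (σ : List ℕ) (hlen : σ.length = n) (hnd : σ.Nodup)
    (hmem : ∀ v, v ∈ σ ↔ 1 ≤ v ∧ v ≤ n) {m : ℕ} (hmn : m ≤ n)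
    (hchain : ∀ k, k + 2 ≤ m → σ.idxOf (n - k) < σ.idxOf (n - k - 1))
    (k : ℕ) (hk : k < m) :
    ∃ h : σ.idxOf (n - k) < σ.length,
      ∀ j : Fin σ.length, (⟨σ.idxOf (n - k), h⟩ : Fin σ.length) < j →
        σ.get j < σ.get ⟨σ.idxOf (n - k), h⟩ := by
  have hvmem : (n - k) ∈ σ := (hmem _).2 ⟨by omega, by omega⟩
  have hlt : σ.idxOf (n - k) < σ.length := List.idxOf_lt_length_iff.2 hvmem
  refine ⟨hlt, ?_⟩
  intro j hj
  have hgidx : σ.get ⟨σ.idxOf (n - k), hlt⟩ = n - k := List.getElem_idxOf hlt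
  rw [hgidx]
  have hj' : σ.idxOf (n - k) < (j : ℕ) := hj
  set v := σ.get j with hv
  have hvmem' : v ∈ σ := by rw [hv]; exact List.get_mem _ _
  have hvb := (hmem v).1 hvmem'
  by_contra hc
  push_neg at hc
  have hjidx : σ.idxOf v = (j : ℕ) := List.Nodup.idxOf_getElem hnd j j.isLt
  rcases (by omega : v = n - k ∨ n - k < v) with he | hlt2
  · -- v = n - k at a different index
    rw [he] at hjidx
    omega
  · -- v = n - k' with k' < k
    set k' := n - v with hk'
    have h1 : k' < k := by omega
    have h2 : n - k' = v := by omega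
    have := chain_mono n σ hchain k k' h1 (by omega)
    rw [h2, hjidx] at this
    omega

lemma rmax_ge (n : ℕ) (σ : List ℕ) (hlen : σ.length = n) (hnd : σ.Nodup)
    (hmem : ∀ v, v ∈ σ ↔ 1 ≤ v ∧ v ≤ n) {m : ℕ} (hm1 : 1 ≤ m) (hmn : m ≤ n)
    (hchain : ∀ k, k + 2 ≤ m → σ.idxOf (n - k) < σ.idxOf (n - k - 1)) :
    m ≤ rmaxCount σ := by
  have hσpos : 0 < σ.length := by omega
  set f : ℕ → Fin σ.length := fun k => ⟨σ.idxOf (n - k) % σ.length, Nat.mod_lt _ hσpos⟩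
    with hf
  have hfk : ∀ k < m, (f k : ℕ) = σ.idxOf (n - k) := by
    intro k hk
    obtain ⟨h, _⟩ := rlmax_at_chain n σ hlen hnd hmem hmn hchain k hk
    simp [hf, Nat.mod_eq_of_lt h]
  rw [rmaxCount, ← Finset.card_range m]
  apply Finset.card_le_card_of_injOn f
  · intro k hk
    rw [Finset.mem_coe, Finset.mem_range] at hk
    obtain ⟨h, hrl⟩ := rlmax_at_chain n σ hlen hnd hmem hmn hchain k hk
    rw [Finset.mem_coe, Finset.mem_filter]
    refine ⟨Finset.mem_univ _, ?_⟩
    have : f k = (⟨σ.idxOf (n - k), h⟩ : Fin σ.length) := by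
      apply Fin.ext; rw [hfk k hk]
    rw [this]
    exact hrl
  · intro k1 hk1 k2 hk2 he
    rw [Finset.mem_coe, Finset.mem_range] at hk1 hk2
    have h1 : σ.idxOf (n - k1) = σ.idxOf (n - k2) := by
      rw [← hfk k1 hk1, ← hfk k2 hk2, he]
    have hm1' : (n - k1) ∈ σ := (hmem _).2 ⟨by omega, by omega⟩
    have hm2' : (n - k2) ∈ σ := (hmem _).2 ⟨by omega, by omega⟩
    have : n - k1 = n - k2 := by
      have e1 : σ[σ.idxOf (n-k1)]'(List.idxOf_lt_length_iff.2 hm1') = n - k1 :=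
        List.getElem_idxOf _
      have e2 : σ[σ.idxOf (n-k2)]'(List.idxOf_lt_length_iff.2 hm2') = n - k2 :=
        List.getElem_idxOf _
      rw [← e1, ← e2]
      congr 1
    omega

lemma tls_ge (n : ℕ) (σ : List ℕ) (hσ : σ.Perm (List.range' 1 n)) {m : ℕ}
    (hm1 : 1 ≤ m) (hmn : m ≤ n)
    (hchain : ∀ k, k + 2 ≤ m → σ.idxOf (n - k) < σ.idxOf (n - k - 1)) :
    m ≤ tailLen n (stackSort σ) := by
  have hlen : σ.length = n := by simpa using hσ.length_eq
  have hnd : σ.Nodup := hσ.nodup_iff.2 (List.nodup_range')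
  have hmem : ∀ v, v ∈ σ ↔ 1 ≤ v ∧ v ≤ n := fun v => by
    rw [hσ.mem_iff, List.mem_range'_1]; omega
  have hsperm : (stackSort σ).Perm σ := ssAux_perm σ.length σ le_rfl
  set s := stackSort σ with hsdef
  have hslen : s.length = n := hsperm.length_eq.trans hlen
  set t := n - m + 1 with ht
  have hPW : σ.Pairwise (fun u v => t ≤ u → t ≤ v → u > v) := by
    rw [List.pairwise_iff_getElem]
    intro i j hi hj hij hu hv
    have hui : σ[i] ∈ σ := List.getElem_mem _
    have hvj : σ[j] ∈ σ := List.getElem_mem _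
    have hub := (hmem _).1 hui
    have hvb := (hmem _).1 hvj
    have hiu : σ.idxOf σ[i] = i := List.Nodup.idxOf_getElem hnd i hi
    have hju : σ.idxOf σ[j] = j := List.Nodup.idxOf_getElem hnd j hj
    by_contra hc
    push_neg at hc
    rcases (by omega : σ[i] = σ[j] ∨ σ[i] < σ[j]) with he | hlt
    · exact absurd (hnd.getElem_inj_iff.1 he) (by omega)
    · set k1 := n - σ[i] with hk1
      set k2 := n - σ[j] with hk2
      have := chain_mono n σ hchain k1 k2 (by omega) (by omega)
      rw [show n - k2 = σ[j] by omega, show n - k1 = σ[i] by omega, hiu, hju] at this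
      omega
  have hPWf : (σ.filter (fun v => t ≤ v)).Pairwise (· > ·) := by
    have h1 := List.Pairwise.sublist (List.filter_sublist (p := fun v => t ≤ v) (l := σ)) hPW
    refine h1.imp_of_mem ?_
    intro a b ha hb hr
    have ha' := (List.mem_filter.1 ha).2
    have hb' := (List.mem_filter.1 hb).2
    exact hr (by simpa using ha') (by simpa using hb')
  have hsuf := ssAux_suffix_filter σ.length σ t le_rfl hPWf
  have hfeq : σ.filter (fun v => t ≤ v) = (List.range' t m).reverse := by
    haveI : Std.Antisymm (α := ℕ) (· > ·) := ⟨fun a b h1 h2 => (lt_asymm h1 h2).elim⟩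
    refine (fun p s => List.Perm.eq_of_pairwise' hPWf s p) ?_ ?_
    · refine (List.perm_ext_iff_of_nodup (hnd.filter _) (List.nodup_reverse.2 (List.nodup_range'))).2 ?_
      intro v
      rw [List.mem_filter, List.mem_reverse, List.mem_range'_1, hmem v]
      simp only [decide_eq_true_eq]
      omega
    · rw [List.pairwise_reverse]
      exact List.pairwise_lt_range' (s := t) (n := m)
  rw [hfeq, List.reverse_reverse] at hsuf
  rw [show ssAux σ.length σ = s from rfl] at hsuf
  obtain ⟨w, hw⟩ := hsuf
  have hwlen : w.length = n - m := by
    have := congrArg List.length hw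
    simp only [List.length_append, List.length_range'] at this
    rw [hslen] at this
    omega
  by_contra hTm
  push_neg at hTm
  have hTS : tailLen n s ∈ {ℓ : ℕ | ℓ = n ∨ s.getD (n - ℓ - 1) 0 ≠ n - ℓ} :=
    Nat.sInf_mem ⟨n, Or.inl rfl⟩
  set T := tailLen n s with hT
  rcases hTS with h | h
  · omega
  · apply h
    have hidxlt : n - T - 1 < s.length := by omega
    rw [List.getD_eq_getElem s 0 hidxlt]
    have hstep : s[n - T - 1]'hidxlt = (w ++ List.range' t m)[n - T - 1]'(by rw [hw]; exact hidxlt) := by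
      congr 1
      exact hw.symm
    rw [hstep, List.getElem_append_right (by omega : w.length ≤ n - T - 1)]
    have : (List.range' t m)[n - T - 1 - w.length]'(by simp; omega) = t + (n - T - 1 - w.length) := by
      simp [List.getElem_range']
    rw [this]
    omega


open List in
/-- For `σ ∈ Sₙ`, `zeil(σ) = min(rmax(σ), tls(σ))`: the largest `m ≥ 1` such that the
entries `n, n-1, …, n-m+1` appear in this order in `σ` is `min(rmax σ, tl(s(σ)))`. -/
theorem stmt8 (n : ℕ) (hn : 1 ≤ n) (σ : List ℕ) (hσ : σ.Perm (List.range' 1 n)) :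
    IsGreatest
      {m : ℕ | 1 ≤ m ∧ m ≤ n ∧
        ∀ k : ℕ, k + 2 ≤ m → σ.idxOf (n - k) < σ.idxOf (n - k - 1)}
      (min (rmaxCount σ) (tailLen n (stackSort σ))) := by
  have hlen : σ.length = n := by simpa using hσ.length_eq
  have hnd : σ.Nodup := hσ.nodup_iff.2 (List.nodup_range')
  have hmem : ∀ v, v ∈ σ ↔ 1 ≤ v ∧ v ≤ n := fun v => by
    rw [hσ.mem_iff, List.mem_range'_1]; omega
  have hsperm : (stackSort σ).Perm σ := ssAux_perm σ.length σ le_rfl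
  set s := stackSort σ with hsdef
  have hslen : s.length = n := hsperm.length_eq.trans hlen
  have hsnd : s.Nodup := hsperm.nodup_iff.2 hnd
  have hTle : tailLen n s ≤ n := Nat.sInf_le (Or.inl rfl)
  have hT1 : ∀ ℓ, ℓ < tailLen n s → s.getD (n - ℓ - 1) 0 = n - ℓ := by
    intro ℓ hℓ
    have hns := Nat.notMem_of_lt_sInf hℓ
    by_contra hc
    exact hns (Or.inr hc)
  set M := min (rmaxCount σ) (tailLen n s) with hM
  have hub : ∀ m, (1 ≤ m ∧ m ≤ n ∧
      ∀ k : ℕ, k + 2 ≤ m → σ.idxOf (n - k) < σ.idxOf (n - k - 1)) → m ≤ M := by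
    rintro m ⟨hm1, hmn, hchain⟩
    exact le_min (rmax_ge n σ hlen hnd hmem hm1 hmn hchain) (tls_ge n σ hσ hm1 hmn hchain)
  constructor
  · refine ⟨?_, ?_, ?_⟩
    · exact le_min
        (rmax_ge n σ hlen hnd hmem le_rfl hn (fun k hk => absurd hk (by omega)))
        (tls_ge n σ hσ le_rfl hn (fun k hk => absurd hk (by omega)))
    · exact le_trans (min_le_right _ _) hTle
    · intro k hk
      by_contra hc
      -- minimal failure k₀
      have hex : ∃ j, j + 2 ≤ M ∧ σ.idxOf (n - j - 1) ≤ σ.idxOf (n - j) :=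
        ⟨k, hk, by omega⟩
      set k₀ := Nat.find hex with hk₀
      obtain ⟨hk₀M, hk₀le⟩ := Nat.find_spec hex
      set m := k₀ + 1 with hmdef
      have hchain' : ∀ j, j + 2 ≤ m → σ.idxOf (n - j) < σ.idxOf (n - j - 1) := by
        intro j hj
        have hj' : j < k₀ := by omega
        have hnot := Nat.find_min hex hj'
        rcases not_and_or.1 hnot with h | h
        · exact absurd (by omega : j + 2 ≤ M) h
        · omega
      have hmn' : m < n := by omega
      have hrm : m + 1 ≤ rmaxCount σ := le_trans (by omega : m + 1 ≤ M) (min_le_left _ _)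
      have hts : m + 1 ≤ tailLen n s := le_trans (by omega : m + 1 ≤ M) (min_le_right _ _)
      set x := n - m with hx
      have hxmem : x ∈ σ := (hmem _).2 ⟨by omega, by omega⟩
      have hymem : x + 1 ∈ σ := (hmem _).2 ⟨by omega, by omega⟩
      have hk₀le' : σ.idxOf x ≤ σ.idxOf (x + 1) := by
        have e1 : n - k₀ - 1 = x := by omega
        have e2 : n - k₀ = x + 1 := by omega
        rwa [e1, e2] at hk₀le
      have hidxne : σ.idxOf x ≠ σ.idxOf (x + 1) := by
        intro he
        have e1 : σ[σ.idxOf x]'(List.idxOf_lt_length_iff.2 hxmem) = x :=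
          List.getElem_idxOf _
        have e2 : σ[σ.idxOf (x+1)]'(List.idxOf_lt_length_iff.2 hymem) = x + 1 :=
          List.getElem_idxOf _
        have hxx : x = x + 1 := by
          conv_lhs => rw [← e1]
          conv_rhs => rw [← e2]
          congr 1
        omega
      have hxy : [x, x + 1] <+ σ := pair_sublist_of_indexOf_lt hxmem hymem (by omega)
      -- find an extra right-to-left maximum with small value
      have hσpos : 0 < σ.length := by omega
      set f : ℕ → Fin σ.length := fun j => ⟨σ.idxOf (n - j) % σ.length, Nat.mod_lt _ hσpos⟩
        with hf
      have hfk : ∀ j < m, (f j : ℕ) = σ.idxOf (n - j) := by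
        intro j hj
        obtain ⟨h, _⟩ := rlmax_at_chain n σ hlen hnd hmem (by omega) hchain' j hj
        simp [hf, Nat.mod_eq_of_lt h]
      set RM := (Finset.univ.filter (fun i : Fin σ.length =>
        ∀ j : Fin σ.length, i < j → σ.get j < σ.get i)) with hRM
      set C := (Finset.range m).image f with hC
      have hCsub : C ⊆ RM := by
        intro i hi
        obtain ⟨j, hj, rfl⟩ := Finset.mem_image.1 hi
        rw [Finset.mem_range] at hj
        obtain ⟨h, hrl⟩ := rlmax_at_chain n σ hlen hnd hmem (by omega) hchain' j hj
        rw [hRM, Finset.mem_filter]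
        refine ⟨Finset.mem_univ _, ?_⟩
        have he : f j = (⟨σ.idxOf (n - j), h⟩ : Fin σ.length) := by
          apply Fin.ext; rw [hfk j hj]
        rw [he]
        exact hrl
      have hClt : C.card < RM.card := by
        have h1 : C.card ≤ m := le_trans Finset.card_image_le (by rw [Finset.card_range])
        have h2 : m + 1 ≤ RM.card := hrm
        omega
      have hnsub : ¬ RM ⊆ C := fun hsub => by
        have := Finset.card_le_card hsub
        omega
      obtain ⟨i', hi'RM, hi'C⟩ := Finset.not_subset.1 hnsub
      set a := σ.get i' with ha
      have hrlmax : ∀ j : Fin σ.length, i' < j → σ.get j < a :=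
        (Finset.mem_filter.1 (hRM ▸ hi'RM)).2
      have hamem : a ∈ σ := by rw [ha]; exact List.get_mem _ _
      have hab := (hmem a).1 hamem
      have haidx : σ.idxOf a = (i' : ℕ) := by
        rw [ha, List.get_eq_getElem]
        exact List.Nodup.idxOf_getElem hnd _ _
      have hanot : ∀ j < m, a ≠ n - j := by
        intro j hj he
        apply hi'C
        rw [hC, Finset.mem_image]
        refine ⟨j, Finset.mem_range.2 hj, ?_⟩
        apply Fin.ext
        rw [hfk j hj, ← he, haidx]
      have hax : a ≠ x := by
        intro he
        have hjlt : σ.idxOf (x + 1) < σ.length := List.idxOf_lt_length_iff.2 hymem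
        have hij : i' < (⟨σ.idxOf (x + 1), hjlt⟩ : Fin σ.length) := by
          show (i' : ℕ) < σ.idxOf (x + 1)
          rw [← haidx, he]
          omega
        have := hrlmax ⟨σ.idxOf (x + 1), hjlt⟩ hij
        rw [List.get_eq_getElem] at this
        have e2 : σ[σ.idxOf (x+1)]'hjlt = x + 1 := List.getElem_idxOf _
        rw [e2] at this
        omega
      have halt : a < x := by
        by_contra hge
        push_neg at hge
        have h1 : n - a < m := by omega
        exact hanot (n - a) h1 (by omega)
      have hrl : ∃ l₁ l₂, σ = l₁ ++ a :: l₂ ∧ ∀ b ∈ l₂, b < a := by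
        refine ⟨σ.take (i' : ℕ), σ.drop ((i' : ℕ) + 1), ?_, ?_⟩
        · conv_lhs => rw [← List.take_append_drop (i' : ℕ) σ]
          rw [List.drop_eq_getElem_cons i'.isLt]
          rw [ha, List.get_eq_getElem]
        · intro b hb
          obtain ⟨jj, hjj, he⟩ := List.mem_iff_getElem.1 hb
          rw [List.length_drop] at hjj
          have hje : (σ.drop ((i' : ℕ) + 1))[jj]'(by rw [List.length_drop]; omega)
              = σ[(i' : ℕ) + 1 + jj]'(by omega) := by simp
          rw [hje] at he
          have hij : i' < (⟨(i' : ℕ) + 1 + jj, by omega⟩ : Fin σ.length) := by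
            show (i' : ℕ) < (i' : ℕ) + 1 + jj
            omega
          have hlt2 := hrlmax ⟨(i' : ℕ) + 1 + jj, by omega⟩ hij
          rw [List.get_eq_getElem] at hlt2
          rw [← he]
          exact hlt2
      have hfin : [x, a] <+ ssAux σ.length σ :=
        ssAux_rlmax_after σ.length σ x (x + 1) a le_rfl (by omega) halt hxy hrl
      rw [show ssAux σ.length σ = s from rfl] at hfin
      obtain ⟨p, q, hpq, hq, hp, hpx, hqa⟩ := pair_sublist_indices hfin
      have hpos : ∀ ℓ, ℓ ≤ m → s[n - ℓ - 1]'(by omega) = n - ℓ := by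
        intro ℓ hℓ
        have h := hT1 ℓ (by omega)
        rwa [List.getD_eq_getElem s 0 (by omega)] at h
      have hxat : s[n - m - 1]'(by omega) = x := hpos m le_rfl
      have hpe : p = n - m - 1 := by
        apply hsnd.getElem_inj_iff.1
        rw [hpx, hxat]
      set ℓq := n - 1 - q with hℓq
      have hℓqm : ℓq ≤ m := by omega
      have hqe : n - ℓq - 1 = q := by omega
      have hsq : s[q]'hq = n - ℓq := by
        have h := hpos ℓq hℓqm
        have h2 : s[q]'hq = s[n - ℓq - 1]'(by omega) := by
          congr 1
          omega
        exact h2.trans h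
      rw [hqa] at hsq
      omega
  · rintro m ⟨hm1, hmn, hchain⟩
    exact hub m ⟨hm1, hmn, hchain⟩
end

section
/- A permutation of [n] avoiding all three patterns 231, 312, and 321 is uniquely determined by its descent set, and its descent set must consist of non-adjacent positions; consequently, the number of permutations in S_n avoiding 231, 312, and 321 with exactly k descents is binomial(n−k, k). -/
/-- The descent set of a list (0-indexed positions `i` with `l_i > l_{i+1}`). -/
def descents (l : List ℕ) : Finset ℕ :=
  (Finset.range (l.length - 1)).filter (fun i => l.getD (i + 1) 0 < l.getD i 0)

/- ### Auxiliary definitions -/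

def st11.fS (S : Finset ℕ) (p : ℕ) : ℕ :=
  if p ∈ S then p + 2 else if 1 ≤ p ∧ p - 1 ∈ S then p else p + 1

def st11.listOf (S : Finset ℕ) (n : ℕ) : List ℕ := (List.range n).map (st11.fS S)

def st11.Sparse (S : Finset ℕ) : Prop := ∀ i ∈ S, i + 1 ∉ S

instance (S : Finset ℕ) : Decidable (st11.Sparse S) := by unfold st11.Sparse; infer_instance

def st11.F (m k : ℕ) : Finset (Finset ℕ) :=
  (Finset.range m).powerset.filter (fun S => st11.Sparse S ∧ S.card = k)

namespace st11

/- ### Pattern witnesses -/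

lemma contains231 (σ : List ℕ) {i j k : ℕ} (hij : i < j) (hjk : j < k) (hk : k < σ.length)
    (h1 : σ[k] < σ[i]) (h2 : σ[i] < σ[j]) : Contains [2,3,1] σ := by
  have hj : j < σ.length := hjk.trans hk
  have hi : i < σ.length := hij.trans hj
  refine ⟨fun t => if (t : ℕ) = 0 then ⟨i, hi⟩ else if (t : ℕ) = 1 then ⟨j, hj⟩ else ⟨k, hk⟩, ?_, ?_⟩
  · intro a b hab
    fin_cases a <;> fin_cases b <;> simp_all [Fin.lt_def] <;> omega
  · intro a b
    fin_cases a <;> fin_cases b <;> simp [Fin.lt_def, List.get_eq_getElem] <;> omega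

lemma contains312 (σ : List ℕ) {i j k : ℕ} (hij : i < j) (hjk : j < k) (hk : k < σ.length)
    (h1 : σ[j] < σ[k]) (h2 : σ[k] < σ[i]) : Contains [3,1,2] σ := by
  have hj : j < σ.length := hjk.trans hk
  have hi : i < σ.length := hij.trans hj
  refine ⟨fun t => if (t : ℕ) = 0 then ⟨i, hi⟩ else if (t : ℕ) = 1 then ⟨j, hj⟩ else ⟨k, hk⟩, ?_, ?_⟩
  · intro a b hab
    fin_cases a <;> fin_cases b <;> simp_all [Fin.lt_def] <;> omega
  · intro a b
    fin_cases a <;> fin_cases b <;> simp [Fin.lt_def, List.get_eq_getElem] <;> omega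

lemma contains321 (σ : List ℕ) {i j k : ℕ} (hij : i < j) (hjk : j < k) (hk : k < σ.length)
    (h1 : σ[j] < σ[i]) (h2 : σ[k] < σ[j]) : Contains [3,2,1] σ := by
  have hj : j < σ.length := hjk.trans hk
  have hi : i < σ.length := hij.trans hj
  refine ⟨fun t => if (t : ℕ) = 0 then ⟨i, hi⟩ else if (t : ℕ) = 1 then ⟨j, hj⟩ else ⟨k, hk⟩, ?_, ?_⟩
  · intro a b hab
    fin_cases a <;> fin_cases b <;> simp_all [Fin.lt_def] <;> omega
  · intro a b
    fin_cases a <;> fin_cases b <;> simp [Fin.lt_def, List.get_eq_getElem] <;> omega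

/- ### Structure of avoiding permutations -/

section perm
variable {n : ℕ} {π : List ℕ} (hπ : π.Perm (List.range' 1 n))
include hπ

lemma len_eq : π.length = n := by simpa using hπ.length_eq

lemma val_mem (p : ℕ) (hp : p < π.length) : 1 ≤ π[p] ∧ π[p] ≤ n := by
  have h : π[p] ∈ π := List.getElem_mem hp
  have h2 := hπ.mem_iff.mp h
  rw [List.mem_range'_1] at h2
  omega

lemma val_inj {p q : ℕ} (hp : p < π.length) (hq : q < π.length) (h : π[p] = π[q]) : p = q := by
  have hnd : π.Nodup := hπ.nodup_iff.mpr List.nodup_range'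
  exact (List.Nodup.getElem_inj_iff hnd).mp h

lemma val_surj (v : ℕ) (h1 : 1 ≤ v) (h2 : v ≤ n) : ∃ q, ∃ hq : q < π.length, π[q] = v := by
  have h : v ∈ π := hπ.mem_iff.mpr (by rw [List.mem_range'_1]; omega)
  exact List.mem_iff_getElem.mp h

variable (h231 : Avoids π [2,3,1]) (h312 : Avoids π [3,1,2]) (h321 : Avoids π [3,2,1])

include h312 h321 in
lemma upper (p : ℕ) (hp : p < π.length) : π[p] ≤ p + 2 := by
  by_contra hcon
  push_neg at hcon
  have hlen : π.length = n := len_eq hπ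
  have hvp : π[p] ≤ n := (val_mem hπ p hp).2
  set P : Finset ℕ := (Finset.range n).filter (fun q => π.getD q 0 ≤ p + 2) with hP
  have hPcard : P.card = p + 2 := by
    have e : P.card = (Finset.Icc 1 (p+2)).card := by
      apply Finset.card_nbij (i := fun q => π.getD q 0)
      · intro q hq
        simp only [hP, Finset.mem_coe, Finset.mem_filter, Finset.mem_range] at hq ⊢
        have hql : q < π.length := by omega
        rw [List.getD_eq_getElem π 0 hql] at hq ⊢
        simp only [Finset.mem_Icc]
        exact ⟨(val_mem hπ q hql).1, hq.2⟩
      · intro a ha b hb hab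
        dsimp only at hab
        simp only [hP, Finset.coe_filter, Set.mem_setOf_eq, Finset.mem_range] at ha hb
        have hal : a < π.length := by omega
        have hbl : b < π.length := by omega
        rw [List.getD_eq_getElem π 0 hal, List.getD_eq_getElem π 0 hbl] at hab
        exact val_inj hπ hal hbl hab
      · intro w hw
        simp only [Finset.coe_Icc, Set.mem_Icc] at hw
        obtain ⟨q, hq, he⟩ := val_surj hπ w hw.1 (by omega)
        refine ⟨q, ?_, ?_⟩
        · simp only [hP, Finset.coe_filter, Set.mem_setOf_eq, Finset.mem_range]
          rw [List.getD_eq_getElem π 0 hq, he]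
          exact ⟨by omega, hw.2⟩
        · dsimp only
          rw [List.getD_eq_getElem π 0 hq, he]
    rw [e, Nat.card_Icc]
    omega
  have hpP : p ∉ P := by
    simp only [hP, Finset.mem_filter, Finset.mem_range, not_and]
    intro _
    rw [List.getD_eq_getElem π 0 hp]; omega
  have hsub : P ⊆ Finset.range p ∪ (P \ Finset.range (p+1)) := by
    intro q hq
    simp only [Finset.mem_union, Finset.mem_sdiff, Finset.mem_range]
    rcases lt_trichotomy q p with h | h | h
    · exact Or.inl h
    · exact absurd (h ▸ hq) hpP
    · exact Or.inr ⟨hq, by omega⟩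
  have hT : 2 ≤ (P \ Finset.range (p+1)).card := by
    have h1 := Finset.card_le_card hsub
    have h2 := Finset.card_union_le (Finset.range p) (P \ Finset.range (p+1))
    rw [Finset.card_range] at h2
    omega
  obtain ⟨a, ha, b, hb, hab⟩ :=
    Finset.one_lt_card.mp (show 1 < (P \ Finset.range (p+1)).card by omega)
  simp only [Finset.mem_sdiff, hP, Finset.mem_filter, Finset.mem_range, not_lt] at ha hb
  have hal : a < π.length := by omega
  have hbl : b < π.length := by omega
  rw [List.getD_eq_getElem π 0 hal] at ha
  rw [List.getD_eq_getElem π 0 hbl] at hb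
  obtain ⟨c, d, hc, hd, hpc, hcd, hc2, hd2⟩ :
      ∃ c, ∃ d, ∃ hc : c < π.length, ∃ hd : d < π.length,
        p < c ∧ c < d ∧ π[c]'hc ≤ p + 2 ∧ π[d]'hd ≤ p + 2 := by
    rcases Nat.lt_or_ge a b with h | h
    · exact ⟨a, b, hal, hbl, by omega, h, ha.1.2, hb.1.2⟩
    · exact ⟨b, a, hbl, hal, by omega, by omega, hb.1.2, ha.1.2⟩
  rcases lt_trichotomy (π[c]'hc) (π[d]'hd) with h | h | h
  · exact h312 (contains312 π hpc hcd hd h (by omega))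
  · exact absurd (val_inj hπ hc hd h) (by omega)
  · exact h321 (contains321 π hpc hcd hd (by omega) h)

include h231 h321 in
lemma lower (p : ℕ) (hp : p < π.length) : p ≤ π[p] := by
  by_contra hcon
  push_neg at hcon
  have hv1 : 1 ≤ π[p] := (val_mem hπ p hp).1
  set B : Finset ℕ := (Finset.range p).filter (fun q => π.getD q 0 < π.getD p 0) with hB
  have hBcard : B.card ≤ π[p] - 1 := by
    have e : B.card ≤ (Finset.Icc 1 (π[p] - 1)).card := by
      apply Finset.card_le_card_of_injOn (f := fun q => π.getD q 0)
      · intro q hq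
        simp only [hB, Finset.mem_coe, Finset.mem_filter, Finset.mem_range] at hq ⊢
        have hql : q < π.length := by omega
        rw [List.getD_eq_getElem π 0 hql, List.getD_eq_getElem π 0 hp] at hq
        rw [List.getD_eq_getElem π 0 hql]
        simp only [Finset.mem_Icc]
        exact ⟨(val_mem hπ q hql).1, by omega⟩
      · intro a ha b hb hab
        dsimp only at hab
        simp only [hB, Finset.coe_filter, Set.mem_setOf_eq, Finset.mem_range] at ha hb
        have hal : a < π.length := by omega
        have hbl : b < π.length := by omega
        rw [List.getD_eq_getElem π 0 hal, List.getD_eq_getElem π 0 hbl] at hab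
        exact val_inj hπ hal hbl hab
    rw [Nat.card_Icc] at e
    omega
  set A : Finset ℕ := (Finset.range p).filter (fun q => π.getD p 0 < π.getD q 0) with hA
  have hsub : Finset.range p ⊆ A ∪ B := by
    intro q hq
    simp only [Finset.mem_range] at hq
    have hql : q < π.length := by omega
    have hne : π[q] ≠ π[p] := fun h => by have := val_inj hπ hql hp h; omega
    simp only [hA, hB, Finset.mem_union, Finset.mem_filter, Finset.mem_range]
    rw [List.getD_eq_getElem π 0 hql, List.getD_eq_getElem π 0 hp]
    rcases lt_trichotomy (π[q]'hql) (π[p]'hp) with h | h | h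
    · exact Or.inr ⟨hq, h⟩
    · exact absurd h hne
    · exact Or.inl ⟨hq, h⟩
  have hAcard : 2 ≤ A.card := by
    have h1 := Finset.card_le_card hsub
    have h2 := Finset.card_union_le A B
    rw [Finset.card_range] at h1
    omega
  obtain ⟨a, ha, b, hb, hab⟩ := Finset.one_lt_card.mp (show 1 < A.card by omega)
  simp only [hA, Finset.mem_filter, Finset.mem_range] at ha hb
  have hal : a < π.length := by omega
  have hbl : b < π.length := by omega
  rw [List.getD_eq_getElem π 0 hal, List.getD_eq_getElem π 0 hp] at ha
  rw [List.getD_eq_getElem π 0 hbl, List.getD_eq_getElem π 0 hp] at hb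
  obtain ⟨c, d, hc, hd, hcd, hdp, hc2, hd2⟩ :
      ∃ c, ∃ d, ∃ hc : c < π.length, ∃ hd : d < π.length,
        c < d ∧ d < p ∧ π[p]'hp < π[c]'hc ∧ π[p]'hp < π[d]'hd := by
    rcases Nat.lt_or_ge a b with h | h
    · exact ⟨a, b, hal, hbl, h, hb.1, ha.2, hb.2⟩
    · exact ⟨b, a, hbl, hal, by omega, ha.1, hb.2, ha.2⟩
  rcases lt_trichotomy (π[c]'hc) (π[d]'hd) with h | h | h
  · exact h231 (contains231 π hcd hdp hp hc2 h)
  · exact absurd (val_inj hπ hc hd h) (by omega)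
  · exact h321 (contains321 π hcd hdp hp h hd2)

include h231 h312 h321 in
lemma swap_pair : ∀ p, ∀ hp : p + 1 < π.length, π[p]'(by omega) = p + 2 → π[p+1] = p + 1 := by
  intro p
  induction p using Nat.strong_induction_on with
  | _ p IH =>
    intro hp hval
    have hlen : π.length = n := len_eq hπ
    obtain ⟨q, hq, he⟩ := val_surj hπ (p+1) (by omega) (by omega)
    have hub := upper hπ h312 h321 q hq
    have hlb := lower hπ h231 h321 q hq
    rcases (show q = p + 1 ∨ q = p ∨ q + 1 = p by omega) with h | h | h
    · subst h; exact he
    · exfalso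
      subst h
      have : (q : ℕ) + 2 = q + 1 := hval.symm.trans he
      omega
    · exfalso
      have hIH := IH q (by omega) (by omega) (he.trans (by omega))
      have heq : π[q+1]'(by omega) = π[p]'(by omega) := by
        congr 1
      have : (q : ℕ) + 1 = p + 2 := (hIH.symm.trans heq).trans hval
      omega

include h231 h312 h321 in
lemma no_fix : ∀ p, ∀ hp : p < π.length, π[p] = p → 1 ≤ p ∧ π[p-1]'(by omega) = p + 1 := by
  intro p
  induction p using Nat.strong_induction_on with
  | _ p IH =>
    intro hp hval
    have h1p : 1 ≤ p := by
      have := (val_mem hπ p hp).1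
      omega
    refine ⟨h1p, ?_⟩
    have hp1 : p - 1 < π.length := by omega
    have hub := upper hπ h312 h321 (p-1) hp1
    have hlb := lower hπ h231 h321 (p-1) hp1
    have hne : π[p-1]'hp1 ≠ π[p]'hp := fun h => by have := val_inj hπ hp1 hp h; omega
    rcases (show π[p-1]'hp1 = p - 1 ∨ π[p-1]'hp1 = p + 1 by omega) with h | h
    · exfalso
      obtain ⟨hge, hprev⟩ := IH (p-1) (by omega) hp1 h
      have hplen : p - 1 - 1 < π.length := by omega
      have heq : π[p-1-1]'hplen = π[p]'hp := hprev.trans (by omega) |>.trans hval.symm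
      have := val_inj hπ hplen hp heq
      omega
    · exact h

include h231 h312 h321 in
lemma mem_descents_iff (p : ℕ) : p ∈ descents π ↔ p + 1 < π.length ∧ π.getD p 0 = p + 2 := by
  simp only [descents, Finset.mem_filter, Finset.mem_range]
  constructor
  · rintro ⟨h1, h2⟩
    have hA : p < π.length := by omega
    have hB : p + 1 < π.length := by omega
    rw [List.getD_eq_getElem π 0 hA, List.getD_eq_getElem π 0 hB] at h2
    rw [List.getD_eq_getElem π 0 hA]
    have hub := upper hπ h312 h321 p hA
    have hlb := lower hπ h231 h321 (p+1) hB
    exact ⟨hB, by omega⟩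
  · rintro ⟨hB, hval⟩
    have hA : p < π.length := by omega
    rw [List.getD_eq_getElem π 0 hA] at hval
    have hswap := swap_pair hπ h231 h312 h321 p hB hval
    rw [List.getD_eq_getElem π 0 hA, List.getD_eq_getElem π 0 hB]
    refine ⟨by omega, ?_⟩
    have h2 : π[p+1]'hB = p + 1 := hswap
    omega

include h231 h312 h321 in
lemma structural (p : ℕ) (hp : p < π.length) : π[p] = fS (descents π) p := by
  by_cases h1 : p ∈ descents π
  · obtain ⟨hp1, hgd⟩ := (mem_descents_iff hπ h231 h312 h321 p).mp h1
    rw [List.getD_eq_getElem π 0 hp] at hgd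
    rw [show fS (descents π) p = p + 2 from by simp [fS, h1]]
    exact hgd
  · by_cases h2 : 1 ≤ p ∧ p - 1 ∈ descents π
    · rw [show fS (descents π) p = p from by simp only [fS, if_neg h1, if_pos h2]]
      obtain ⟨hp1, hgd⟩ := (mem_descents_iff hπ h231 h312 h321 (p-1)).mp h2.2
      have hC : p - 1 < π.length := by omega
      rw [List.getD_eq_getElem π 0 hC] at hgd
      have hswap := swap_pair hπ h231 h312 h321 (p-1) hp1 hgd
      have hpp : p - 1 + 1 = p := by omega
      have heq : π[p]'hp = π[p-1+1]'hp1 := by congr 1 <;> omega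
      rw [heq, hswap]
      omega
    · rw [show fS (descents π) p = p + 1 from by simp only [fS, if_neg h1, if_neg h2]]
      have hub := upper hπ h312 h321 p hp
      have hlb := lower hπ h231 h321 p hp
      rcases (show π[p]'hp = p ∨ π[p]'hp = p + 1 ∨ π[p]'hp = p + 2 by omega) with h | h | h
      · exfalso
        obtain ⟨hge, hprev⟩ := no_fix hπ h231 h312 h321 p hp h
        apply h2
        refine ⟨hge, (mem_descents_iff hπ h231 h312 h321 (p-1)).mpr ⟨by omega, ?_⟩⟩
        have hC : p - 1 < π.length := by omega
        rw [List.getD_eq_getElem π 0 hC]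
        exact hprev.trans (by omega)
      · exact h
      · exfalso
        apply h1
        have hn : π[p]'hp ≤ n := (val_mem hπ p hp).2
        have hlen : π.length = n := len_eq hπ
        refine (mem_descents_iff hπ h231 h312 h321 p).mpr ⟨by omega, ?_⟩
        rw [List.getD_eq_getElem π 0 hp]
        exact h

include h231 h312 h321 in
lemma descents_sparse : Sparse (descents π) := by
  intro i hi hi1
  obtain ⟨hA, hgd⟩ := (mem_descents_iff hπ h231 h312 h321 i).mp hi
  obtain ⟨hB, hgd1⟩ := (mem_descents_iff hπ h231 h312 h321 (i+1)).mp hi1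
  rw [List.getD_eq_getElem π 0 hA] at hgd1
  rw [List.getD_eq_getElem π 0 (by omega : i < π.length)] at hgd
  have hswap := swap_pair hπ h231 h312 h321 i hA hgd
  have : (i : ℕ) + 1 = i + 3 := hswap.symm.trans hgd1
  omega

end perm

/- ### Properties of `listOf` -/

lemma fS_lb (S : Finset ℕ) (p : ℕ) : p ≤ fS S p := by unfold fS; split_ifs <;> omega

lemma fS_ub (S : Finset ℕ) (p : ℕ) : fS S p ≤ p + 2 := by unfold fS; split_ifs <;> omega

lemma fS_cases (S : Finset ℕ) (p : ℕ) : (p ∈ S ∧ fS S p = p + 2) ∨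
    (p ∉ S ∧ 1 ≤ p ∧ p - 1 ∈ S ∧ fS S p = p) ∨
    (p ∉ S ∧ ¬(1 ≤ p ∧ p - 1 ∈ S) ∧ fS S p = p + 1) := by
  unfold fS
  split_ifs with h1 h2
  · exact Or.inl ⟨h1, rfl⟩
  · exact Or.inr (Or.inl ⟨h1, h2.1, h2.2, rfl⟩)
  · exact Or.inr (Or.inr ⟨h1, h2, rfl⟩)

lemma avoids_of_bounds (σ : List ℕ) (hb : ∀ p, ∀ h : p < σ.length, p ≤ σ[p] ∧ σ[p] ≤ p + 2) :
    Avoids σ [2,3,1] ∧ Avoids σ [3,1,2] ∧ Avoids σ [3,2,1] := by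
  refine ⟨?_, ?_, ?_⟩ <;> rintro ⟨g, hmono, hiff⟩
  · have h20 := (hiff ⟨2, by norm_num⟩ ⟨0, by norm_num⟩).mp (by decide)
    have h01 : g ⟨0, by norm_num⟩ < g ⟨1, by norm_num⟩ := hmono (by decide)
    have h12 : g ⟨1, by norm_num⟩ < g ⟨2, by norm_num⟩ := hmono (by decide)
    rw [List.get_eq_getElem, List.get_eq_getElem] at h20
    have hbi := hb _ (g ⟨0, by norm_num⟩).isLt
    have hbk := hb _ (g ⟨2, by norm_num⟩).isLt
    have hv1 := Fin.lt_def.mp h01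
    have hv2 := Fin.lt_def.mp h12
    omega
  · have h10 := (hiff ⟨1, by norm_num⟩ ⟨0, by norm_num⟩).mp (by decide)
    have h12 := (hiff ⟨1, by norm_num⟩ ⟨2, by norm_num⟩).mp (by decide)
    have h20 := (hiff ⟨2, by norm_num⟩ ⟨0, by norm_num⟩).mp (by decide)
    have h01 : g ⟨0, by norm_num⟩ < g ⟨1, by norm_num⟩ := hmono (by decide)
    have h12' : g ⟨1, by norm_num⟩ < g ⟨2, by norm_num⟩ := hmono (by decide)
    rw [List.get_eq_getElem, List.get_eq_getElem] at h10 h12 h20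
    have hbi := hb _ (g ⟨0, by norm_num⟩).isLt
    have hbj := hb _ (g ⟨1, by norm_num⟩).isLt
    have hbk := hb _ (g ⟨2, by norm_num⟩).isLt
    have hv1 := Fin.lt_def.mp h01
    have hv2 := Fin.lt_def.mp h12'
    omega
  · have h20 := (hiff ⟨2, by norm_num⟩ ⟨0, by norm_num⟩).mp (by decide)
    have h01 : g ⟨0, by norm_num⟩ < g ⟨1, by norm_num⟩ := hmono (by decide)
    have h12 : g ⟨1, by norm_num⟩ < g ⟨2, by norm_num⟩ := hmono (by decide)
    rw [List.get_eq_getElem, List.get_eq_getElem] at h20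
    have hbi := hb _ (g ⟨0, by norm_num⟩).isLt
    have hbk := hb _ (g ⟨2, by norm_num⟩).isLt
    have hv1 := Fin.lt_def.mp h01
    have hv2 := Fin.lt_def.mp h12
    omega

lemma listOf_length (S : Finset ℕ) (n : ℕ) : (listOf S n).length = n := by simp [listOf]

lemma listOf_getElem (S : Finset ℕ) (n : ℕ) (p : ℕ) (hp : p < (listOf S n).length) :
    (listOf S n)[p] = fS S p := by simp [listOf]

section listOf
variable {n : ℕ} {S : Finset ℕ} (hsp : Sparse S) (hS : S ⊆ Finset.range (n - 1))

include hS in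
lemma fS_val (p : ℕ) (hp : p < n) : 1 ≤ fS S p ∧ fS S p ≤ n := by
  rcases fS_cases S p with ⟨h1, e⟩ | ⟨h1, h2, h3, e⟩ | ⟨h1, h2, e⟩
  · have := Finset.mem_range.mp (hS h1); omega
  · omega
  · omega

include hsp in
lemma fS_inj : Function.Injective (fS S) := by
  intro p q h
  rcases fS_cases S p with ⟨p1, e1⟩ | ⟨p1, p2, p3, e1⟩ | ⟨p1, p2, e1⟩ <;>
    rcases fS_cases S q with ⟨q1, e2⟩ | ⟨q1, q2, q3, e2⟩ | ⟨q1, q2, e2⟩ <;>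
      rw [e1, e2] at h
  · omega
  · -- p+2 = q, p ∈ S, q-1 ∈ S
    exfalso
    have : p + 1 ∈ S := by rw [show p + 1 = q - 1 by omega]; exact q3
    exact hsp p p1 this
  · -- p+2 = q+1, q = p+1, q in "other" case
    exfalso
    exact q2 ⟨by omega, by rw [show q - 1 = p by omega]; exact p1⟩
  · exfalso
    have : q + 1 ∈ S := by rw [show q + 1 = p - 1 by omega]; exact p3
    exact hsp q q1 this
  · omega
  · -- p = q+1, p-1 = q ∈ S, but q ∉ S
    exfalso
    apply q1
    rw [show q = p - 1 by omega]
    exact p3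
  · exfalso
    exact p2 ⟨by omega, by rw [show p - 1 = q by omega]; exact q1⟩
  · exfalso
    apply p1
    rw [show p = q - 1 by omega]
    exact q3
  · omega

include hsp hS in
lemma fS_surj (v : ℕ) (h1 : 1 ≤ v) (h2 : v ≤ n) : ∃ p, p < n ∧ fS S p = v := by
  by_cases hv2 : 2 ≤ v ∧ v - 2 ∈ S
  · refine ⟨v - 2, ?_, ?_⟩
    · have := Finset.mem_range.mp (hS hv2.2); omega
    · rw [show fS S (v-2) = v - 2 + 2 from by simp [fS, hv2.2]]; omega
  · by_cases hv1 : v - 1 ∈ S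
    · have hvS : v ∉ S := by
        have := hsp (v-1) hv1
        rwa [show v - 1 + 1 = v by omega] at this
      refine ⟨v, ?_, ?_⟩
      · have := Finset.mem_range.mp (hS hv1); omega
      · simp only [fS, if_neg hvS]
        rw [if_pos (show 1 ≤ v ∧ v - 1 ∈ S from ⟨h1, hv1⟩)]
    · refine ⟨v - 1, by omega, ?_⟩
      have hn1 : v - 1 ∉ S := hv1
      have hn2 : ¬(1 ≤ v - 1 ∧ v - 1 - 1 ∈ S) := by
        rintro ⟨ha, hb⟩
        exact hv2 ⟨by omega, by rwa [show v - 2 = v - 1 - 1 by omega]⟩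
      rw [show fS S (v-1) = v - 1 + 1 from by simp only [fS, if_neg hn1, if_neg hn2]]
      omega

include hsp hS in
lemma listOf_perm : (listOf S n).Perm (List.range' 1 n) := by
  apply List.perm_of_nodup_nodup_toFinset_eq
  · exact (List.nodup_range (n := n)).map (fS_inj hsp)
  · exact List.nodup_range'
  · ext a
    simp only [List.mem_toFinset, listOf, List.mem_map, List.mem_range, List.mem_range'_1]
    constructor
    · rintro ⟨p, hp, rfl⟩
      have := fS_val hS p hp
      omega
    · rintro ⟨ha1, ha2⟩
      obtain ⟨p, hp, he⟩ := fS_surj hsp hS a ha1 (by omega)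
      exact ⟨p, hp, he⟩

include hsp hS in
lemma descents_listOf : descents (listOf S n) = S := by
  ext i
  simp only [descents, Finset.mem_filter, Finset.mem_range, listOf_length]
  constructor
  · rintro ⟨hi, h2⟩
    have hA : i < (listOf S n).length := by rw [listOf_length]; omega
    have hB : i + 1 < (listOf S n).length := by rw [listOf_length]; omega
    rw [List.getD_eq_getElem _ 0 hA, List.getD_eq_getElem _ 0 hB,
      listOf_getElem S n i hA, listOf_getElem S n (i+1) hB] at h2
    by_contra hiS
    rcases fS_cases S i with ⟨p1, e1⟩ | ⟨p1, p2, p3, e1⟩ | ⟨p1, p2, e1⟩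
    · exact hiS p1
    all_goals {
      rcases fS_cases S (i+1) with ⟨q1, e2⟩ | ⟨q1, q2, q3, e2⟩ | ⟨q1, q2, e2⟩
      · omega
      · rw [show i + 1 - 1 = i by omega] at q3; exact hiS q3
      · omega }
  · intro hi
    have hin : i < n - 1 := Finset.mem_range.mp (hS hi)
    have hA : i < (listOf S n).length := by rw [listOf_length]; omega
    have hB : i + 1 < (listOf S n).length := by rw [listOf_length]; omega
    refine ⟨hin, ?_⟩
    rw [List.getD_eq_getElem _ 0 hA, List.getD_eq_getElem _ 0 hB,
      listOf_getElem S n i hA, listOf_getElem S n (i+1) hB]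
    have hi1 : i + 1 ∉ S := hsp i hi
    rw [show fS S i = i + 2 from by simp [fS, hi]]
    rw [show fS S (i+1) = i + 1 from by
      simp only [fS, if_neg hi1, Nat.add_sub_cancel]
      rw [if_pos ⟨by omega, hi⟩]]
    omega

end listOf

/- ### Counting sparse subsets -/

lemma F_zero (m : ℕ) : F m 0 = {∅} := by
  ext S
  simp only [F, Finset.mem_filter, Finset.mem_powerset, Finset.mem_singleton,
    Finset.card_eq_zero]
  constructor
  · rintro ⟨_, _, h⟩; exact h
  · rintro rfl
    exact ⟨Finset.empty_subset _, fun i hi => absurd hi (Finset.notMem_empty i), rfl⟩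

lemma F_big {m k : ℕ} (h : m < k) : F m k = ∅ := by
  ext S
  simp only [F, Finset.mem_filter, Finset.mem_powerset, Finset.notMem_empty, iff_false]
  rintro ⟨h1, _, h3⟩
  have := Finset.card_le_card h1
  rw [Finset.card_range] at this
  omega

lemma F_one_one : F 1 1 = {{0}} := by
  ext S
  simp only [F, Finset.mem_filter, Finset.mem_powerset, Finset.mem_singleton]
  constructor
  · rintro ⟨h1, _, h3⟩
    rw [Finset.range_one] at h1
    rcases Finset.subset_singleton_iff.mp h1 with rfl | rfl
    · simp at h3
    · rfl
  · rintro rfl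
    refine ⟨by rw [Finset.range_one], ?_, rfl⟩
    intro i hi
    simp only [Finset.mem_singleton] at hi ⊢
    omega

lemma cardF_rec (m k : ℕ) : (F (m+2) (k+1)).card = (F (m+1) (k+1)).card + (F m k).card := by
  classical
  have hsplit : (F (m+2) (k+1)).card =
      ((F (m+2) (k+1)).filter (fun S => m+1 ∉ S)).card +
      ((F (m+2) (k+1)).filter (fun S => m+1 ∈ S)).card := by
    exact (Finset.card_filter_add_card_filter_not
      (s := F (m+2) (k+1)) (p := fun S => m+1 ∈ S)).symm.trans (Nat.add_comm _ _)
  have hA : (F (m+2) (k+1)).filter (fun S => m+1 ∉ S) = F (m+1) (k+1) := by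
    ext S
    simp only [Finset.mem_filter, F, Finset.mem_powerset]
    constructor
    · rintro ⟨⟨h1, h2, h3⟩, h4⟩
      refine ⟨?_, h2, h3⟩
      intro x hx
      have := Finset.mem_range.mp (h1 hx)
      have : x ≠ m + 1 := fun he => h4 (he ▸ hx)
      simp only [Finset.mem_range]
      omega
    · rintro ⟨h1, h2, h3⟩
      have h4 : m + 1 ∉ S := fun hx => by
        have := Finset.mem_range.mp (h1 hx); omega
      exact ⟨⟨h1.trans (Finset.range_subset_range.mpr (by omega)), h2, h3⟩, h4⟩
  have hB : ((F (m+2) (k+1)).filter (fun S => m+1 ∈ S)).card = (F m k).card := by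
    apply Finset.card_bij (fun S _ => S.erase (m+1))
    · rintro S hS
      simp only [Finset.mem_filter, F, Finset.mem_powerset] at hS ⊢
      obtain ⟨⟨h1, h2, h3⟩, h4⟩ := hS
      refine ⟨?_, ?_, ?_⟩
      · intro x hx
        obtain ⟨hxne, hxS⟩ := Finset.mem_erase.mp hx
        have hxr := Finset.mem_range.mp (h1 hxS)
        have hxm : x ≠ m := by
          rintro rfl
          exact h2 x hxS h4
        simp only [Finset.mem_range]
        omega
      · intro i hi
        obtain ⟨hine, hiS⟩ := Finset.mem_erase.mp hi
        intro hcon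
        exact h2 i hiS (Finset.mem_erase.mp hcon).2
      · rw [Finset.card_erase_of_mem h4, h3]
        omega
    · intro S hS T hT he
      simp only [Finset.mem_filter] at hS hT
      rw [← Finset.insert_erase hS.2, ← Finset.insert_erase hT.2, he]
    · intro T hT
      simp only [F, Finset.mem_filter, Finset.mem_powerset] at hT
      obtain ⟨h1, h2, h3⟩ := hT
      have hm1T : m + 1 ∉ T := fun hx => by
        have := Finset.mem_range.mp (h1 hx); omega
      refine ⟨insert (m+1) T, ?_, ?_⟩
      · simp only [Finset.mem_filter, F, Finset.mem_powerset]
        refine ⟨⟨?_, ?_, ?_⟩, Finset.mem_insert_self _ _⟩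
        · intro x hx
          rcases Finset.mem_insert.mp hx with rfl | hxT
          · simp only [Finset.mem_range]; omega
          · have := Finset.mem_range.mp (h1 hxT)
            simp only [Finset.mem_range]; omega
        · intro i hi
          rcases Finset.mem_insert.mp hi with rfl | hiT
          · intro hcon
            rcases Finset.mem_insert.mp hcon with he | hT2
            · omega
            · have := Finset.mem_range.mp (h1 hT2); omega
          · intro hcon
            rcases Finset.mem_insert.mp hcon with he | hT2
            · have := Finset.mem_range.mp (h1 hiT); omega
            · exact h2 i hiT hT2
        · rw [Finset.card_insert_of_notMem hm1T, h3]
      · rw [Finset.erase_insert hm1T]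
  rw [hsplit, hA, hB]

lemma cardF : ∀ m k, (F m k).card = (m + 1 - k).choose k := by
  intro m
  induction m using Nat.strong_induction_on with
  | _ m IH =>
    intro k
    match m, k with
    | m, 0 => rw [F_zero]; simp
    | 0, k+1 =>
      rw [F_big (by omega), Finset.card_empty,
        show 0 + 1 - (k+1) = 0 by omega, Nat.choose_eq_zero_of_lt (by omega)]
    | 1, k+1 =>
      match k with
      | 0 => rw [F_one_one]; simp
      | k+1 =>
        rw [F_big (by omega), Finset.card_empty,
          show 1 + 1 - (k+2) = 0 by omega, Nat.choose_eq_zero_of_lt (by omega)]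
    | m+2, k+1 =>
      rw [cardF_rec, IH (m+1) (by omega) (k+1), IH m (by omega) k]
      by_cases hk : k ≤ m + 1
      · rw [show m + 1 + 1 - (k+1) = m + 1 - k by omega,
          show m + 2 + 1 - (k+1) = (m + 1 - k) + 1 by omega,
          Nat.choose_succ_succ' (m+1-k) k]
        omega
      · rw [Nat.choose_eq_zero_of_lt (by omega), Nat.choose_eq_zero_of_lt (by omega),
          Nat.choose_eq_zero_of_lt (by omega)]

end st11

/-- A permutation of `[n]` avoiding 231, 312 and 321 is determined by its descent set,
its descent set has no two adjacent positions, and the number of such permutations with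
exactly `k` descents is `(n-k).choose k`. -/
theorem stmt11 (n k : ℕ) :
    (∀ π π' : List ℕ, π.Perm (List.range' 1 n) → π'.Perm (List.range' 1 n) →
      Avoids π [2, 3, 1] → Avoids π [3, 1, 2] → Avoids π [3, 2, 1] →
      Avoids π' [2, 3, 1] → Avoids π' [3, 1, 2] → Avoids π' [3, 2, 1] →
      descents π = descents π' → π = π') ∧
    (∀ π : List ℕ, π.Perm (List.range' 1 n) →
      Avoids π [2, 3, 1] → Avoids π [3, 1, 2] → Avoids π [3, 2, 1] →
      ∀ i ∈ descents π, i + 1 ∉ descents π) ∧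
    Nat.card {π : List ℕ // π.Perm (List.range' 1 n) ∧
      Avoids π [2, 3, 1] ∧ Avoids π [3, 1, 2] ∧ Avoids π [3, 2, 1] ∧
      (descents π).card = k} = (n - k).choose k := by
  refine ⟨?_, ?_, ?_⟩
  · intro π π' hπ hπ' a1 a2 a3 b1 b2 b3 hd
    have l1 := st11.len_eq hπ
    have l2 := st11.len_eq hπ'
    apply List.ext_getElem (by omega)
    intro p h1 h2
    rw [st11.structural hπ a1 a2 a3 p h1, st11.structural hπ' b1 b2 b3 p h2, hd]
  · intro π hπ a1 a2 a3
    exact st11.descents_sparse hπ a1 a2 a3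
  · have e : {π : List ℕ // π.Perm (List.range' 1 n) ∧
        Avoids π [2, 3, 1] ∧ Avoids π [3, 1, 2] ∧ Avoids π [3, 2, 1] ∧
        (descents π).card = k} ≃ {S : Finset ℕ // S ∈ st11.F (n-1) k} := by
      refine ⟨fun π => ⟨descents π.1, ?_⟩, fun S => ⟨st11.listOf S.1 n, ?_⟩, ?_, ?_⟩
      · obtain ⟨π, hπ, a1, a2, a3, hcard⟩ := π
        simp only [st11.F, Finset.mem_filter, Finset.mem_powerset]
        refine ⟨?_, st11.descents_sparse hπ a1 a2 a3, hcard⟩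
        have hl := st11.len_eq hπ
        rw [descents, hl]
        exact Finset.filter_subset _ _
      · obtain ⟨S, hS⟩ := S
        simp only [st11.F, Finset.mem_filter, Finset.mem_powerset] at hS
        obtain ⟨h1, h2, h3⟩ := hS
        have hperm := st11.listOf_perm h2 h1
        have hav := st11.avoids_of_bounds (st11.listOf S n) (fun p hp => by
          rw [st11.listOf_getElem S n p hp]
          exact ⟨st11.fS_lb S p, st11.fS_ub S p⟩)
        refine ⟨hperm, hav.1, hav.2.1, hav.2.2, ?_⟩
        rw [st11.descents_listOf h2 h1, h3]
      · rintro ⟨π, hπ, a1, a2, a3, hcard⟩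
        apply Subtype.ext
        simp only
        have hl := st11.len_eq hπ
        apply List.ext_getElem (by rw [st11.listOf_length, hl])
        intro p hp1 hp2
        rw [st11.listOf_getElem _ n p hp1]
        exact (st11.structural hπ a1 a2 a3 p hp2).symm
      · rintro ⟨S, hS⟩
        apply Subtype.ext
        simp only
        simp only [st11.F, Finset.mem_filter, Finset.mem_powerset] at hS
        exact st11.descents_listOf hS.2.1 hS.1
    rw [Nat.card_congr e]
    have hc : Nat.card { S // S ∈ st11.F (n-1) k } = (st11.F (n-1) k).card :=
      Nat.card_eq_finsetCard _
    rw [hc, st11.cardF]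
    match k with
    | 0 => simp
    | k+1 => congr 1; omega
end

section
/- The formal power series G(x) = 1/(1 − x·C(x·C(x))), where C is the Catalan generating function, satisfies the polynomial equation Q(G, x) = 0 where Q(a,x) = 1 − 3a + (3+2x)a² + (−1−4x+2x²)a³ + (2x−2x²+x³)a⁴. -/
/-- The power series `G = 1/(1 - x·C(x·C(x)))` satisfies `Q(G, x) = 0` where
`Q(a,x) = 1 - 3a + (3+2x)a² + (-1-4x+2x²)a³ + (2x-2x²+x³)a⁴`: here `C` is the Catalan
generating function (characterized by `xC² + 1 - C = 0`), `D = C(xC(x))` (characterized by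
`(xC)·D² + 1 - D = 0`), and `G` is characterized by `G·(1 - x·D) = 1`. -/
theorem stmt16 (C D G : PowerSeries ℚ)
    (hC : PowerSeries.X * C ^ 2 + 1 - C = 0)
    (hD : PowerSeries.X * C * D ^ 2 + 1 - D = 0)
    (hG : G * (1 - PowerSeries.X * D) = 1) :
    1 - 3 * G + (3 + 2 * PowerSeries.X) * G ^ 2 +
      (-1 - 4 * PowerSeries.X + 2 * PowerSeries.X ^ 2) * G ^ 3 +
      (2 * PowerSeries.X - 2 * PowerSeries.X ^ 2 + PowerSeries.X ^ 3) * G ^ 4 = 0 := by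
  -- C has constant coefficient 1, hence C ≠ 0 and u ≠ 0
  have hC0 : PowerSeries.constantCoeff C = 1 := by
    have := congrArg (fun p : PowerSeries ℚ => PowerSeries.constantCoeff p) hC
    simp at this
    linarith
  have hCne : C ≠ 0 := fun h => by simp [h] at hC0
  set x : PowerSeries ℚ := PowerSeries.X with hx
  set u : PowerSeries ℚ := PowerSeries.X * C with huu
  set t : PowerSeries ℚ := PowerSeries.X * D with htt
  have hXne : (PowerSeries.X : PowerSeries ℚ) ≠ 0 := PowerSeries.X_ne_zero
  have hu : u ≠ 0 := mul_ne_zero hXne hCne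
  -- u * f = 0 where f = u³ - 2u² + (1+t)u + t² - t
  have huf : u * (u ^ 3 - 2 * u ^ 2 + (1 + t) * u + t ^ 2 - t) = 0 := by
    linear_combination (x ^ 2) * hD + ((u ^ 2 - u + t - x) * x) * hC
  have hf : u ^ 3 - 2 * u ^ 2 + (1 + t) * u + t ^ 2 - t = 0 :=
    (mul_eq_zero.mp huf).resolve_left hu
  -- (t - x) * u + (t² - t + x) = 0
  have hBA : (t - x) * u + (t ^ 2 - t + x) = 0 := by
    linear_combination hf - ((u - 1) * x) * hC
  -- resultant relation in t and x
  have hR : t ^ 4 - t ^ 3 + 2 * x * t ^ 2 - 2 * x ^ 2 * t + x ^ 3 = 0 := by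
    linear_combination ((t ^ 2 - t + x) - (t - x) * u + (t - x)) * hBA +
      ((t - x) ^ 2 * x) * hC
  -- eliminate t via hG
  linear_combination G ^ 4 * hR +
    (-1 + 2 * G - G ^ 2 + t * G - t * G ^ 2 - t ^ 2 * G ^ 2 + t ^ 3 * G ^ 3
      - 2 * x * G ^ 2 + 2 * x * G ^ 3 + 2 * x * t * G ^ 3 - 2 * x ^ 2 * G ^ 3) * hG
end

section
/- Define Y(x) = (3x + 2x² − x√(1−4x−4x²)) / (2(1+x)²) as a formal power series. Then Y satisfies the kernel equation x·Y·(C(Y) − 1) − Y + x = 0, where C is the Catalan generating function. -/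
/-- With `S = √(1-4x-4x²)` (the power series square root with constant term 1),
`Y = (3x + 2x² - xS)/(2(1+x)²)`, and `W = C(Y)` where `C` is the Catalan generating
function (so `W` is characterized by `Y·W² + 1 - W = 0`), the kernel equation
`x·Y·(C(Y) - 1) - Y + x = 0` holds. -/
theorem stmt17 (S Y W : PowerSeries ℚ)
    (hS2 : S ^ 2 = 1 - 4 * PowerSeries.X - 4 * PowerSeries.X ^ 2)
    (hS0 : PowerSeries.constantCoeff S = 1)
    (hY : 2 * (1 + PowerSeries.X) ^ 2 * Y
        = 3 * PowerSeries.X + 2 * PowerSeries.X ^ 2 - PowerSeries.X * S)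
    (hW : Y * W ^ 2 + 1 - W = 0) :
    PowerSeries.X * Y * (W - 1) - Y + PowerSeries.X = 0 := by
  -- constant and first coefficients of Y
  have hY0 : PowerSeries.constantCoeff Y = 0 := by
    have h := congrArg (PowerSeries.constantCoeff) hY
    simp at h
    rcases h with h | h
    · rw [map_ofNat] at h; norm_num at h
    · exact h
  have hY1 : PowerSeries.coeff 1 Y = 1 := by
    have hY' : (PowerSeries.C 2) * Y
        + PowerSeries.X * ((PowerSeries.C 4) * Y
          + PowerSeries.X * ((PowerSeries.C 2) * Y))
        + PowerSeries.X * S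
        = PowerSeries.X * (PowerSeries.C 3)
          + PowerSeries.X * (PowerSeries.X * (PowerSeries.C 2)) := by
      simp only [map_ofNat]
      linear_combination hY
    have h := congrArg (PowerSeries.coeff 1) hY'
    simp [PowerSeries.coeff_succ_X_mul, hY0, hS0] at h
    linarith
  -- the quadratic satisfied by A = Y*(1+X) - X
  have key : (4 * (1 + PowerSeries.X) ^ 2) * (Y * (1 + PowerSeries.X) - PowerSeries.X) ^ 2
      = (4 * (1 + PowerSeries.X) ^ 2) * (PowerSeries.X * (Y - PowerSeries.X)) := by
    linear_combination (PowerSeries.X ^ 2) * hS2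
      + (2 * (1 + PowerSeries.X) ^ 2 * Y
        - (3 * PowerSeries.X + 2 * PowerSeries.X ^ 2 - PowerSeries.X * S)
        - 2 * PowerSeries.X * S) * hY
  have h4ne : (4 * (1 + PowerSeries.X) ^ 2 : PowerSeries ℚ) ≠ 0 := by
    intro h
    have h' := congrArg (PowerSeries.constantCoeff) h
    rw [map_mul, map_ofNat] at h'
    simp at h'
  have hA2 : (Y * (1 + PowerSeries.X) - PowerSeries.X) ^ 2
      = PowerSeries.X * (Y - PowerSeries.X) := mul_left_cancel₀ h4ne key
  -- K * U = 0
  have hKU : (PowerSeries.X * Y * (W - 1) - Y + PowerSeries.X)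
      * (PowerSeries.X * Y * W + Y * (1 + PowerSeries.X) - 2 * PowerSeries.X) = 0 := by
    linear_combination (-1 : PowerSeries ℚ) * hA2 + (PowerSeries.X ^ 2 * Y) * hW
  -- U ≠ 0 (its coefficient at degree 1 is -1)
  have hUne : (PowerSeries.X * Y * W + Y * (1 + PowerSeries.X) - 2 * PowerSeries.X
      : PowerSeries ℚ) ≠ 0 := by
    intro h
    have h' : PowerSeries.X * (Y * W) + Y + PowerSeries.X * Y
        = PowerSeries.X * (PowerSeries.C 2) := by
      rw [map_ofNat]
      linear_combination h
    have hc := congrArg (PowerSeries.coeff 1) h'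
    simp [PowerSeries.coeff_succ_X_mul, hY0, hY1] at hc
  rcases mul_eq_zero.mp hKU with h | h
  · exact h
  · exact absurd h hUne
end
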